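/- κ weakly Prospect-dominates λ if and only if E[v(κᵀX)] ≥ E[v(λᵀX)] for every S-shaped utility v in the class V of functions whose restriction to ℝ₋ is a convex mixture of negative ramp functions u ↦ max(u, z) (z ≤ 0) and whose restriction to ℝ₊ is a convex mixture of capped ramp functions u ↦ min(u, z) (z ≥ 0), with v(0) = 0. -/

import Mathlib

open MeasureTheory

variable {n : ℕ}

open Set

section ProspectHelpers

/-- Layer-cake pointwise identity, negative side. -/
lemma layer_neg {z : ℝ} (hz : z ≤ 0) (y : ℝ) :
    (∫ u in Ioc z 0, (if u < y ∧ y ≤ 0 then (1:ℝ) else 0)) =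
      if y ≤ 0 then max y z - z else 0 := by
  by_cases hy : y ≤ 0
  · have h1 : (fun u : ℝ => if u < y ∧ y ≤ 0 then (1:ℝ) else 0)
        = (Iio y).indicator (fun _ => (1:ℝ)) := by
      funext u; simp [Set.indicator_apply, hy]
    rw [h1, setIntegral_indicator measurableSet_Iio, setIntegral_const]
    have h2 : Ioc z 0 ∩ Iio y = Ioo z y := by
      ext u; simp only [mem_inter_iff, mem_Ioc, mem_Iio, mem_Ioo]
      constructor
      · rintro ⟨⟨h, _⟩, h'⟩; exact ⟨h, h'⟩
      · rintro ⟨h, h'⟩; exact ⟨⟨h, le_trans h'.le hy⟩, h'⟩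
    rw [h2, if_pos hy, measureReal_def, Real.volume_Ioo]
    rcases le_total y z with h | h
    · rw [max_eq_right h, ENNReal.ofReal_eq_zero.mpr (by linarith)]
      simp
    · rw [max_eq_left h, ENNReal.toReal_ofReal (by linarith)]
      simp
  · simp [hy]

/-- Layer-cake pointwise identity, positive side. -/
lemma layer_pos {z : ℝ} (hz : 0 ≤ z) (y : ℝ) :
    (∫ u in Ioc 0 z, (if u < y then (1:ℝ) else 0)) =
      if 0 < y then min y z else 0 := by
  have h1 : (fun u : ℝ => if u < y then (1:ℝ) else 0)
      = (Iio y).indicator (fun _ => (1:ℝ)) := by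
    funext u; simp [Set.indicator_apply]
  rw [h1, setIntegral_indicator measurableSet_Iio, setIntegral_const]
  by_cases hy : 0 < y
  · rw [if_pos hy]
    rcases le_or_gt y z with h | h
    · have h2 : Ioc 0 z ∩ Iio y = Ioo 0 y := by
        ext u; simp only [mem_inter_iff, mem_Ioc, mem_Iio, mem_Ioo]
        constructor
        · rintro ⟨⟨h', _⟩, h''⟩; exact ⟨h', h''⟩
        · rintro ⟨h', h''⟩; exact ⟨⟨h', le_trans h''.le h⟩, h''⟩
      rw [h2, measureReal_def, Real.volume_Ioo, ENNReal.toReal_ofReal (by linarith), min_eq_left h]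
      simp
    · have h2 : Ioc 0 z ∩ Iio y = Ioc 0 z := by
        refine inter_eq_self_of_subset_left fun u hu => ?_
        exact lt_of_le_of_lt hu.2 h
      rw [h2, measureReal_def, Real.volume_Ioc, ENNReal.toReal_ofReal (by linarith), min_eq_right h.le]
      simp
  · have h2 : Ioc 0 z ∩ Iio y = ∅ := by
      ext u; simp only [mem_inter_iff, mem_Ioc, mem_Iio, mem_empty_iff_false, iff_false]
      rintro ⟨⟨h', _⟩, h''⟩
      exact hy (lt_trans h' h'')
    rw [h2, if_neg hy]
    simp

lemma indicator_Ioc_integral (ν : Measure ℝ) [IsProbabilityMeasure ν] (u : ℝ) :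
    ∫ y, (if u < y ∧ y ≤ 0 then (1:ℝ) else 0) ∂ν = (ν (Ioc u 0)).toReal := by
  have h1 : (fun y : ℝ => if u < y ∧ y ≤ 0 then (1:ℝ) else 0)
      = (Ioc u 0).indicator (fun _ => (1:ℝ)) := by
    funext y; simp [Set.indicator_apply, Set.mem_Ioc]
  rw [h1, integral_indicator_const (1:ℝ) measurableSet_Ioc, smul_eq_mul, mul_one, measureReal_def]

lemma indicator_Ioi_integral (ν : Measure ℝ) [IsProbabilityMeasure ν] (u : ℝ) :
    ∫ y, (if u < y then (1:ℝ) else 0) ∂ν = (ν (Ioi u)).toReal := by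
  have h1 : (fun y : ℝ => if u < y then (1:ℝ) else 0)
      = (Ioi u).indicator (fun _ => (1:ℝ)) := by
    funext y; simp [Set.indicator_apply]
  rw [h1, integral_indicator_const (1:ℝ) measurableSet_Ioi, smul_eq_mul, mul_one, measureReal_def]

/-- Expectation of the truncated negative ramp. -/
lemma keyF (ν : Measure ℝ) [IsProbabilityMeasure ν] {z : ℝ} (hz : z ≤ 0) :
    ∫ y, (if y ≤ 0 then max y z else 0) ∂ν =
      z * (ν (Iic 0)).toReal + ∫ u in z..0, (ν (Ioc u 0)).toReal := by
  haveI : IsFiniteMeasure (volume.restrict (Ioc z 0)) :=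
    ⟨by rw [Measure.restrict_apply_univ]; exact measure_Ioc_lt_top⟩
  have hsplit : ∀ y : ℝ, (if y ≤ 0 then max y z else 0)
      = (Iic 0).indicator (fun _ => z) y + (if y ≤ 0 then max y z - z else 0) := by
    intro y; by_cases hy : y ≤ 0 <;> simp [Set.indicator_apply, hy]
  have hint1 : Integrable ((Iic 0).indicator (fun _ => z)) ν :=
    (integrable_const z).indicator measurableSet_Iic
  have hmeas2 : Measurable (fun y : ℝ => if y ≤ 0 then max y z - z else 0) :=
    Measurable.ite measurableSet_Iic ((measurable_id.max measurable_const).sub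
      measurable_const) measurable_const
  have hint2 : Integrable (fun y : ℝ => if y ≤ 0 then max y z - z else 0) ν := by
    refine Integrable.mono' (integrable_const (|z|)) hmeas2.aestronglyMeasurable
      (Filter.Eventually.of_forall fun y => ?_)
    by_cases hy : y ≤ 0
    · rw [if_pos hy, Real.norm_eq_abs, abs_of_nonneg (by simp [le_max_right]),
        abs_of_nonpos hz]
      have : max y z ≤ 0 := max_le hy hz
      linarith
    · simp [hy, abs_nonneg]
  calc ∫ y, (if y ≤ 0 then max y z else 0) ∂ν
      = ∫ y, ((Iic 0).indicator (fun _ => z) y + (if y ≤ 0 then max y z - z else 0)) ∂ν := by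
        exact integral_congr_ae (Filter.Eventually.of_forall hsplit)
    _ = (∫ y, (Iic 0).indicator (fun _ => z) y ∂ν)
        + ∫ y, (if y ≤ 0 then max y z - z else 0) ∂ν := integral_add hint1 hint2
    _ = z * (ν (Iic 0)).toReal + ∫ u in z..0, (ν (Ioc u 0)).toReal := by
        congr 1
        · rw [integral_indicator_const z measurableSet_Iic, smul_eq_mul, mul_comm, measureReal_def]
        · -- layer cake + Fubini
          have hlayer : ∀ y : ℝ, (if y ≤ 0 then max y z - z else 0)
              = ∫ u in Ioc z 0, (if u < y ∧ y ≤ 0 then (1:ℝ) else 0) := fun y =>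
            (layer_neg hz y).symm
          have hS : MeasurableSet {p : ℝ × ℝ | p.2 < p.1 ∧ p.1 ≤ 0} :=
            (measurableSet_lt measurable_snd measurable_fst).inter
              (measurable_fst measurableSet_Iic)
          have hintP : Integrable
              (Function.uncurry fun (y u : ℝ) => if u < y ∧ y ≤ 0 then (1:ℝ) else 0)
              (ν.prod (volume.restrict (Ioc z 0))) := by
            refine Integrable.mono' (integrable_const 1)
              ?_ (Filter.Eventually.of_forall fun p => ?_)
            · exact (Measurable.ite hS measurable_const measurable_const).aestronglyMeasurable
            · by_cases h : p.2 < p.1 ∧ p.1 ≤ 0 <;>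
                simp [Function.uncurry, h]
          calc ∫ y, (if y ≤ 0 then max y z - z else 0) ∂ν
              = ∫ y, (∫ u in Ioc z 0, (if u < y ∧ y ≤ 0 then (1:ℝ) else 0)) ∂ν :=
                integral_congr_ae (Filter.Eventually.of_forall hlayer)
            _ = ∫ u in Ioc z 0, (∫ y, (if u < y ∧ y ≤ 0 then (1:ℝ) else 0) ∂ν) :=
                integral_integral_swap hintP
            _ = ∫ u in Ioc z 0, (ν (Ioc u 0)).toReal := by
                exact integral_congr_ae (Filter.Eventually.of_forall fun u =>
                  indicator_Ioc_integral ν u)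
            _ = ∫ u in z..0, (ν (Ioc u 0)).toReal :=
                (intervalIntegral.integral_of_le hz).symm

/-- Expectation of the capped positive ramp. -/
lemma keyH (ν : Measure ℝ) [IsProbabilityMeasure ν] {z : ℝ} (hz : 0 ≤ z) :
    ∫ y, (if 0 < y then min y z else 0) ∂ν = ∫ u in (0:ℝ)..z, (ν (Ioi u)).toReal := by
  haveI : IsFiniteMeasure (volume.restrict (Ioc 0 z)) :=
    ⟨by rw [Measure.restrict_apply_univ]; exact measure_Ioc_lt_top⟩
  have hlayer : ∀ y : ℝ, (if 0 < y then min y z else 0)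
      = ∫ u in Ioc 0 z, (if u < y then (1:ℝ) else 0) := fun y => (layer_pos hz y).symm
  have hS : MeasurableSet {p : ℝ × ℝ | p.2 < p.1} :=
    measurableSet_lt measurable_snd measurable_fst
  have hintP : Integrable (Function.uncurry fun (y u : ℝ) => if u < y then (1:ℝ) else 0)
      (ν.prod (volume.restrict (Ioc 0 z))) := by
    refine Integrable.mono' (integrable_const 1)
      (Measurable.ite hS measurable_const measurable_const).aestronglyMeasurable
      (Filter.Eventually.of_forall fun p => ?_)
    by_cases h : p.2 < p.1 <;> simp [Function.uncurry, h]
  calc ∫ y, (if 0 < y then min y z else 0) ∂ν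
      = ∫ y, (∫ u in Ioc 0 z, (if u < y then (1:ℝ) else 0)) ∂ν :=
        integral_congr_ae (Filter.Eventually.of_forall hlayer)
    _ = ∫ u in Ioc 0 z, (∫ y, (if u < y then (1:ℝ) else 0) ∂ν) :=
        integral_integral_swap hintP
    _ = ∫ u in Ioc 0 z, (ν (Ioi u)).toReal :=
        integral_congr_ae (Filter.Eventually.of_forall fun u => indicator_Ioi_integral ν u)
    _ = ∫ u in (0:ℝ)..z, (ν (Ioi u)).toReal := (intervalIntegral.integral_of_le hz).symm

lemma cdf_mono (ν : Measure ℝ) [IsProbabilityMeasure ν] :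
    Monotone fun u : ℝ => (ν (Iic u)).toReal := fun a b hab =>
  ENNReal.toReal_mono (measure_ne_top ν _) (measure_mono (Iic_subset_Iic.mpr hab))

lemma Ioc_toReal_eq (ν : Measure ℝ) [IsProbabilityMeasure ν] {u : ℝ} (hu : u ≤ 0) :
    (ν (Ioc u 0)).toReal = (ν (Iic 0)).toReal - (ν (Iic u)).toReal := by
  have h1 : Iic u ⊆ Iic 0 := Iic_subset_Iic.mpr hu
  have h2 : ν (Ioc u 0) = ν (Iic 0) - ν (Iic u) := by
    rw [← Iic_sdiff_Iic, measure_diff h1 measurableSet_Iic.nullMeasurableSet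
      (measure_ne_top ν _)]
  rw [h2, ENNReal.toReal_sub_of_le (measure_mono h1) (measure_ne_top ν _)]

lemma Ioi_toReal_eq (ν : Measure ℝ) [IsProbabilityMeasure ν] (u : ℝ) :
    (ν (Ioi u)).toReal = 1 - (ν (Iic u)).toReal := by
  have h2 : ν (Ioi u) = 1 - ν (Iic u) := by
    rw [← Set.compl_Iic, measure_compl measurableSet_Iic (measure_ne_top ν _), measure_univ]
  rw [h2, ENNReal.toReal_sub_of_le prob_le_one ENNReal.one_ne_top, ENNReal.toReal_one]

/-- Difference of the negative-side functionals. -/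
lemma phi_diff (νk νl : Measure ℝ) [IsProbabilityMeasure νk] [IsProbabilityMeasure νl]
    {z : ℝ} (hz : z ≤ 0) :
    (z * (νk (Iic 0)).toReal + ∫ u in z..0, (νk (Ioc u 0)).toReal)
      - (z * (νl (Iic 0)).toReal + ∫ u in z..0, (νl (Ioc u 0)).toReal)
    = - ∫ u in z..0, ((νk (Iic u)).toReal - (νl (Iic u)).toReal) := by
  have hik : IntervalIntegrable (fun u => (νk (Iic u)).toReal) volume z 0 :=
    (cdf_mono νk).intervalIntegrable
  have hil : IntervalIntegrable (fun u => (νl (Iic u)).toReal) volume z 0 :=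
    (cdf_mono νl).intervalIntegrable
  have hck : (∫ u in z..0, (νk (Ioc u 0)).toReal)
      = (0 - z) * (νk (Iic 0)).toReal - ∫ u in z..0, (νk (Iic u)).toReal := by
    rw [show (fun u => (νk (Ioc u 0)).toReal) = fun u => (νk (Ioc u 0)).toReal from rfl]
    rw [intervalIntegral.integral_congr (g := fun u => (νk (Iic 0)).toReal - (νk (Iic u)).toReal)
      (fun u hu => ?_), intervalIntegral.integral_sub intervalIntegrable_const hik,
      intervalIntegral.integral_const, smul_eq_mul]
    have hu' : u ≤ 0 := by
      rcases Set.mem_uIcc.mp hu with h | h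
      · exact h.2
      · linarith [h.1, h.2]
    exact Ioc_toReal_eq νk hu'
  have hcl : (∫ u in z..0, (νl (Ioc u 0)).toReal)
      = (0 - z) * (νl (Iic 0)).toReal - ∫ u in z..0, (νl (Iic u)).toReal := by
    rw [intervalIntegral.integral_congr (g := fun u => (νl (Iic 0)).toReal - (νl (Iic u)).toReal)
      (fun u hu => ?_), intervalIntegral.integral_sub intervalIntegrable_const hil,
      intervalIntegral.integral_const, smul_eq_mul]
    have hu' : u ≤ 0 := by
      rcases Set.mem_uIcc.mp hu with h | h
      · exact h.2
      · linarith [h.1, h.2]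
    exact Ioc_toReal_eq νl hu'
  rw [hck, hcl, intervalIntegral.integral_sub hik hil]
  ring

/-- Difference of the positive-side functionals. -/
lemma psi_diff (νk νl : Measure ℝ) [IsProbabilityMeasure νk] [IsProbabilityMeasure νl]
    (z : ℝ) :
    (∫ u in (0:ℝ)..z, (νk (Ioi u)).toReal) - (∫ u in (0:ℝ)..z, (νl (Ioi u)).toReal)
    = - ∫ u in (0:ℝ)..z, ((νk (Iic u)).toReal - (νl (Iic u)).toReal) := by
  have hik : IntervalIntegrable (fun u => (νk (Iic u)).toReal) volume 0 z :=
    (cdf_mono νk).intervalIntegrable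
  have hil : IntervalIntegrable (fun u => (νl (Iic u)).toReal) volume 0 z :=
    (cdf_mono νl).intervalIntegrable
  have hck : (∫ u in (0:ℝ)..z, (νk (Ioi u)).toReal)
      = (z - 0) * 1 - ∫ u in (0:ℝ)..z, (νk (Iic u)).toReal := by
    rw [intervalIntegral.integral_congr (g := fun u => 1 - (νk (Iic u)).toReal)
      (fun u _ => Ioi_toReal_eq νk u),
      intervalIntegral.integral_sub intervalIntegrable_const hik,
      intervalIntegral.integral_const, smul_eq_mul]
  have hcl : (∫ u in (0:ℝ)..z, (νl (Ioi u)).toReal)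
      = (z - 0) * 1 - ∫ u in (0:ℝ)..z, (νl (Iic u)).toReal := by
    rw [intervalIntegral.integral_congr (g := fun u => 1 - (νl (Iic u)).toReal)
      (fun u _ => Ioi_toReal_eq νl u),
      intervalIntegral.integral_sub intervalIntegrable_const hil,
      intervalIntegral.integral_const, smul_eq_mul]
  rw [hck, hcl, intervalIntegral.integral_sub hik hil]
  ring

lemma abs_max_le_abs (y z : ℝ) : |max y z| ≤ |y| + |z| := by
  rcases le_total y z with h | h
  · rw [max_eq_right h]; linarith [abs_nonneg y]
  · rw [max_eq_left h]; linarith [abs_nonneg z]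

lemma abs_min_le_abs (y z : ℝ) : |min y z| ≤ |y| + |z| := by
  rcases le_total y z with h | h
  · rw [min_eq_left h]; linarith [abs_nonneg z]
  · rw [min_eq_right h]; linarith [abs_nonneg y]

section Master

variable {α : Type*} [MeasurableSpace α]

/-- Master representation: expectation of an S-shaped utility of `Y` in terms of the
pushforward measure. -/
lemma integral_v_rep (μ : Measure α) [IsProbabilityMeasure μ]
    (Y : α → ℝ) (hY : Measurable Y)
    (w₁ w₂ : Measure ℝ) (hp₁ : IsProbabilityMeasure w₁) (hp₂ : IsProbabilityMeasure w₂)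
    (hw₁ : ∀ᵐ z ∂w₁, z ≤ 0) (hw₂ : ∀ᵐ z ∂w₂, 0 ≤ z)
    (hi₁ : Integrable (fun z : ℝ => z) w₁) (hi₂ : Integrable (fun z : ℝ => z) w₂)
    (v : ℝ → ℝ)
    (hv₁ : ∀ u : ℝ, u ≤ 0 → v u = ∫ z, max u z ∂w₁)
    (hv₂ : ∀ u : ℝ, 0 ≤ u → v u = ∫ z, min u z ∂w₂) :
    ∫ x, v (Y x) ∂μ =
      (∫ z, (z * ((μ.map Y) (Iic 0)).toReal
          + ∫ u in z..0, ((μ.map Y) (Ioc u 0)).toReal) ∂w₁)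
      + ∫ z, (∫ u in (0:ℝ)..z, ((μ.map Y) (Ioi u)).toReal) ∂w₂ := by
  haveI : IsProbabilityMeasure (μ.map Y) := Measure.isProbabilityMeasure_map hY.aemeasurable
  set ν := μ.map Y with hν
  set A : ℝ → ℝ := fun y => ∫ z, max y z ∂w₁ with hA
  set B : ℝ → ℝ := fun y => ∫ z, min y z ∂w₂ with hB
  -- integrability of the ramps
  have hintmax : ∀ y : ℝ, Integrable (fun z => max y z) w₁ := by
    intro y
    refine Integrable.mono' ((integrable_const (|y|)).add hi₁.abs)
      ((measurable_const.max measurable_id).aestronglyMeasurable)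
      (Filter.Eventually.of_forall fun z => ?_)
    simpa using abs_max_le_abs y z
  have hintmin : ∀ y : ℝ, Integrable (fun z => min y z) w₂ := by
    intro y
    refine Integrable.mono' ((integrable_const (|y|)).add hi₂.abs)
      ((measurable_const.min measurable_id).aestronglyMeasurable)
      (Filter.Eventually.of_forall fun z => ?_)
    simpa using abs_min_le_abs y z
  -- monotonicity / measurability of A, B
  have hAmono : Monotone A := fun a b hab =>
    integral_mono (hintmax a) (hintmax b) fun z => max_le_max hab le_rfl
  have hBmono : Monotone B := fun a b hab =>
    integral_mono (hintmin a) (hintmin b) fun z => min_le_min hab le_rfl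
  -- pointwise decomposition
  have hpt : ∀ x, v (Y x)
      = (if Y x ≤ 0 then A (Y x) else 0) + (if 0 < Y x then B (Y x) else 0) := by
    intro x
    rcases le_or_gt (Y x) 0 with h | h
    · rw [if_pos h, if_neg (not_lt.mpr h), add_zero, hv₁ _ h]
    · rw [if_neg (not_le.mpr h), if_pos h, zero_add, hv₂ _ h.le]
  -- bounds
  set M₁ : ℝ := ∫ z, |z| ∂w₁ with hM₁
  set M₂ : ℝ := ∫ z, |z| ∂w₂ with hM₂
  have hM₁nn : 0 ≤ M₁ := integral_nonneg fun z => abs_nonneg z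
  have hM₂nn : 0 ≤ M₂ := integral_nonneg fun z => abs_nonneg z
  have hAbound : ∀ y : ℝ, y ≤ 0 → |A y| ≤ M₁ := by
    intro y hy
    calc |A y| ≤ ∫ z, |max y z| ∂w₁ := by
          simpa using norm_integral_le_integral_norm (μ := w₁) (f := fun z => max y z)
      _ ≤ M₁ := by
          refine integral_mono_ae (hintmax y).abs hi₁.abs (hw₁.mono fun z hz => ?_)
          show |max y z| ≤ |z|
          rw [abs_of_nonpos (max_le hy hz), abs_of_nonpos hz]
          simp [le_max_right]
  have hBbound : ∀ y : ℝ, 0 ≤ y → |B y| ≤ M₂ := by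
    intro y hy
    calc |B y| ≤ ∫ z, |min y z| ∂w₂ := by
          simpa using norm_integral_le_integral_norm (μ := w₂) (f := fun z => min y z)
      _ ≤ M₂ := by
          refine integral_mono_ae (hintmin y).abs hi₂.abs (hw₂.mono fun z hz => ?_)
          show |min y z| ≤ |z|
          rw [abs_of_nonneg (le_min hy hz), abs_of_nonneg hz]
          simp [min_le_right]
  -- integrability of the two pieces
  have hf₁meas : Measurable fun x => if Y x ≤ 0 then A (Y x) else 0 :=
    Measurable.ite (hY measurableSet_Iic) (hAmono.measurable.comp hY) measurable_const
  have hf₂meas : Measurable fun x => if 0 < Y x then B (Y x) else 0 :=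
    Measurable.ite (measurableSet_lt measurable_const hY)
      (hBmono.measurable.comp hY) measurable_const
  have hf₁ : Integrable (fun x => if Y x ≤ 0 then A (Y x) else 0) μ := by
    refine Integrable.mono' (integrable_const M₁) hf₁meas.aestronglyMeasurable
      (Filter.Eventually.of_forall fun x => ?_)
    by_cases h : Y x ≤ 0
    · simpa [h] using hAbound _ h
    · simpa [h] using hM₁nn
  have hf₂ : Integrable (fun x => if 0 < Y x then B (Y x) else 0) μ := by
    refine Integrable.mono' (integrable_const M₂) hf₂meas.aestronglyMeasurable
      (Filter.Eventually.of_forall fun x => ?_)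
    by_cases h : 0 < Y x
    · simpa [h] using hBbound _ h.le
    · simpa [h] using hM₂nn
  -- Fubini for the first piece
  have hswap₁ : ∫ x, (if Y x ≤ 0 then A (Y x) else 0) ∂μ
      = ∫ z, (∫ x, (if Y x ≤ 0 then max (Y x) z else 0) ∂μ) ∂w₁ := by
    have hptA : ∀ x, (if Y x ≤ 0 then A (Y x) else 0)
        = ∫ z, (if Y x ≤ 0 then max (Y x) z else 0) ∂w₁ := by
      intro x
      by_cases h : Y x ≤ 0
      · simp only [h, if_true, hA]
      · simp [h]
    rw [integral_congr_ae (Filter.Eventually.of_forall hptA)]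
    refine integral_integral_swap ?_
    -- integrability on the product
    have hmeasP : Measurable fun p : α × ℝ =>
        if Y p.1 ≤ 0 then max (Y p.1) p.2 else 0 :=
      Measurable.ite ((hY.comp measurable_fst) measurableSet_Iic)
        ((hY.comp measurable_fst).max measurable_snd) measurable_const
    have habs : Integrable (fun p : α × ℝ => |p.2|) (μ.prod w₁) := by
      have hmap : (μ.prod w₁).map Prod.snd = w₁ := by
        rw [Measure.map_snd_prod, measure_univ, one_smul]
      have h1 : Integrable (fun z : ℝ => |z|) ((μ.prod w₁).map Prod.snd) := by
        rw [hmap]; exact hi₁.abs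
      exact (integrable_map_measure
        (by rw [hmap]; exact hi₁.abs.aestronglyMeasurable)
        measurable_snd.aemeasurable).mp h1
    have hae : ∀ᵐ p : α × ℝ ∂(μ.prod w₁), p.2 ≤ 0 := by
      rw [ae_iff]
      have hset : {p : α × ℝ | ¬ p.2 ≤ 0} = (Set.univ : Set α) ×ˢ {z : ℝ | ¬ z ≤ 0} := by
        ext p; simp
      rw [hset, Measure.prod_prod]
      rw [ae_iff] at hw₁
      rw [hw₁, mul_zero]
    refine Integrable.mono' habs hmeasP.aestronglyMeasurable (hae.mono fun p hp => ?_)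
    by_cases h : Y p.1 ≤ 0
    · rw [Function.uncurry]
      simp only [h, if_true]
      rw [Real.norm_eq_abs, abs_of_nonpos (max_le h hp), abs_of_nonpos hp]
      simp [le_max_right]
    · rw [Function.uncurry]
      simp [h, abs_nonneg]
  -- Fubini for the second piece
  have hswap₂ : ∫ x, (if 0 < Y x then B (Y x) else 0) ∂μ
      = ∫ z, (∫ x, (if 0 < Y x then min (Y x) z else 0) ∂μ) ∂w₂ := by
    have hptB : ∀ x, (if 0 < Y x then B (Y x) else 0)
        = ∫ z, (if 0 < Y x then min (Y x) z else 0) ∂w₂ := by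
      intro x
      by_cases h : 0 < Y x
      · simp only [h, if_true, hB]
      · simp [h]
    rw [integral_congr_ae (Filter.Eventually.of_forall hptB)]
    refine integral_integral_swap ?_
    have hmeasP : Measurable fun p : α × ℝ =>
        if 0 < Y p.1 then min (Y p.1) p.2 else 0 :=
      Measurable.ite (measurableSet_lt measurable_const (hY.comp measurable_fst))
        ((hY.comp measurable_fst).min measurable_snd) measurable_const
    have habs : Integrable (fun p : α × ℝ => |p.2|) (μ.prod w₂) := by
      have hmap : (μ.prod w₂).map Prod.snd = w₂ := by
        rw [Measure.map_snd_prod, measure_univ, one_smul]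
      have h1 : Integrable (fun z : ℝ => |z|) ((μ.prod w₂).map Prod.snd) := by
        rw [hmap]; exact hi₂.abs
      exact (integrable_map_measure
        (by rw [hmap]; exact hi₂.abs.aestronglyMeasurable)
        measurable_snd.aemeasurable).mp h1
    have hae : ∀ᵐ p : α × ℝ ∂(μ.prod w₂), 0 ≤ p.2 := by
      rw [ae_iff]
      have hset : {p : α × ℝ | ¬ 0 ≤ p.2} = (Set.univ : Set α) ×ˢ {z : ℝ | ¬ 0 ≤ z} := by
        ext p; simp
      rw [hset, Measure.prod_prod]
      rw [ae_iff] at hw₂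
      rw [hw₂, mul_zero]
    refine Integrable.mono' habs hmeasP.aestronglyMeasurable (hae.mono fun p hp => ?_)
    by_cases h : 0 < Y p.1
    · rw [Function.uncurry]
      simp only [h, if_true]
      rw [Real.norm_eq_abs, abs_of_nonneg (le_min h.le hp), abs_of_nonneg hp]
      simp [min_le_right]
    · rw [Function.uncurry]
      simp [h, abs_nonneg]
  -- identify the inner integrals
  have hinner₁ : ∀ᵐ z ∂w₁, (∫ x, (if Y x ≤ 0 then max (Y x) z else 0) ∂μ)
      = z * (ν (Iic 0)).toReal + ∫ u in z..0, (ν (Ioc u 0)).toReal := by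
    refine hw₁.mono fun z hz => ?_
    have hmeas : Measurable fun y : ℝ => if y ≤ 0 then max y z else 0 :=
      Measurable.ite measurableSet_Iic (measurable_id.max measurable_const) measurable_const
    rw [← integral_map hY.aemeasurable hmeas.aestronglyMeasurable, ← hν, keyF ν hz]
  have hinner₂ : ∀ᵐ z ∂w₂, (∫ x, (if 0 < Y x then min (Y x) z else 0) ∂μ)
      = ∫ u in (0:ℝ)..z, (ν (Ioi u)).toReal := by
    refine hw₂.mono fun z hz => ?_
    have hmeas : Measurable fun y : ℝ => if 0 < y then min y z else 0 :=
      Measurable.ite (measurableSet_lt measurable_const measurable_id)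
        (measurable_id.min measurable_const) measurable_const
    rw [← integral_map hY.aemeasurable hmeas.aestronglyMeasurable, ← hν, keyH ν hz]
  calc ∫ x, v (Y x) ∂μ
      = ∫ x, ((if Y x ≤ 0 then A (Y x) else 0) + (if 0 < Y x then B (Y x) else 0)) ∂μ :=
        integral_congr_ae (Filter.Eventually.of_forall hpt)
    _ = (∫ x, (if Y x ≤ 0 then A (Y x) else 0) ∂μ)
        + ∫ x, (if 0 < Y x then B (Y x) else 0) ∂μ := integral_add hf₁ hf₂
    _ = (∫ z, (z * (ν (Iic 0)).toReal + ∫ u in z..0, (ν (Ioc u 0)).toReal) ∂w₁)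
        + ∫ z, (∫ u in (0:ℝ)..z, (ν (Ioi u)).toReal) ∂w₂ := by
        rw [hswap₁, hswap₂, integral_congr_ae hinner₁, integral_congr_ae hinner₂]

end Master

lemma integrable_id_dirac (a : ℝ) : Integrable (fun z : ℝ => z) (Measure.dirac a) :=
  (integrable_const a).congr (ae_eq_dirac (fun z : ℝ => z)).symm

lemma prob_toReal_le_one (ν : Measure ℝ) [IsProbabilityMeasure ν] (s : Set ℝ) :
    (ν s).toReal ≤ 1 := by
  have := ENNReal.toReal_mono ENNReal.one_ne_top (prob_le_one (μ := ν) (s := s))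
  simpa using this

lemma phi_integrable (ν : Measure ℝ) [IsProbabilityMeasure ν] (w₁ : Measure ℝ)
    [IsProbabilityMeasure w₁] (hw₁ : ∀ᵐ z ∂w₁, z ≤ 0)
    (hi₁ : Integrable (fun z : ℝ => z) w₁) :
    Integrable (fun z => z * (ν (Iic 0)).toReal
      + ∫ u in z..0, (ν (Ioc u 0)).toReal) w₁ := by
  set g : ℝ → ℝ := fun u => (ν (Ioc u 0)).toReal with hg
  have hganti : Antitone g := fun a b hab =>
    ENNReal.toReal_mono (measure_ne_top _ _) (measure_mono (Ioc_subset_Ioc_left hab))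
  have hgint : ∀ a b : ℝ, IntervalIntegrable g volume a b := fun a b =>
    hganti.intervalIntegrable
  have hgnonneg : ∀ u, 0 ≤ g u := fun u => ENNReal.toReal_nonneg
  have hg1 : ∀ u, g u ≤ 1 := fun u => prob_toReal_le_one ν _
  have hFanti : Antitone fun z => ∫ u in z..0, g u := by
    intro a b hab
    calc (∫ u in b..0, g u) ≤ (∫ u in a..b, g u) + ∫ u in b..0, g u :=
          le_add_of_nonneg_left
            (intervalIntegral.integral_nonneg hab fun u _ => hgnonneg u)
      _ = ∫ u in a..0, g u :=
          intervalIntegral.integral_add_adjacent_intervals (hgint a b) (hgint b 0)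
  have hmeas : Measurable fun z => z * (ν (Iic 0)).toReal + ∫ u in z..0, g u :=
    (measurable_id.mul_const _).add hFanti.measurable
  refine Integrable.mono' (hi₁.abs.const_mul 2) hmeas.aestronglyMeasurable
    (hw₁.mono fun z hz => ?_)
  have hc0 : (0:ℝ) ≤ (ν (Iic 0)).toReal := ENNReal.toReal_nonneg
  have hc1 : (ν (Iic 0)).toReal ≤ 1 := prob_toReal_le_one ν _
  have h1 : |z * (ν (Iic 0)).toReal| ≤ |z| := by
    rw [abs_mul, abs_of_nonneg hc0]
    nlinarith [abs_nonneg z]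
  have h2 : |∫ u in z..0, g u| ≤ |z| := by
    have := intervalIntegral.norm_integral_le_of_norm_le_const (C := 1) (f := g)
      (a := z) (b := 0) (fun u _ => by
        rw [Real.norm_eq_abs, abs_of_nonneg (hgnonneg u)]; exact hg1 u)
    simpa using this
  calc ‖z * (ν (Iic 0)).toReal + ∫ u in z..0, g u‖
      ≤ |z * (ν (Iic 0)).toReal| + |∫ u in z..0, g u| := abs_add_le _ _
    _ ≤ 2 * |z| := by linarith

lemma psi_integrable (ν : Measure ℝ) [IsProbabilityMeasure ν] (w₂ : Measure ℝ)
    [IsProbabilityMeasure w₂] (hi₂ : Integrable (fun z : ℝ => z) w₂) :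
    Integrable (fun z => ∫ u in (0:ℝ)..z, (ν (Ioi u)).toReal) w₂ := by
  set g : ℝ → ℝ := fun u => (ν (Ioi u)).toReal with hg
  have hganti : Antitone g := fun a b hab =>
    ENNReal.toReal_mono (measure_ne_top _ _) (measure_mono (Ioi_subset_Ioi hab))
  have hgint : ∀ a b : ℝ, IntervalIntegrable g volume a b := fun a b =>
    hganti.intervalIntegrable
  have hgnonneg : ∀ u, 0 ≤ g u := fun u => ENNReal.toReal_nonneg
  have hg1 : ∀ u, g u ≤ 1 := fun u => prob_toReal_le_one ν _
  have hFmono : Monotone fun z => ∫ u in (0:ℝ)..z, g u := by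
    intro a b hab
    calc (∫ u in (0:ℝ)..a, g u) ≤ (∫ u in (0:ℝ)..a, g u) + ∫ u in a..b, g u :=
          le_add_of_nonneg_right
            (intervalIntegral.integral_nonneg hab fun u _ => hgnonneg u)
      _ = ∫ u in (0:ℝ)..b, g u :=
          intervalIntegral.integral_add_adjacent_intervals (hgint 0 a) (hgint a b)
  refine Integrable.mono' hi₂.abs hFmono.measurable.aestronglyMeasurable
    (Filter.Eventually.of_forall fun z => ?_)
  have := intervalIntegral.norm_integral_le_of_norm_le_const (C := 1) (f := g)
    (a := 0) (b := z) (fun u _ => by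
      rw [Real.norm_eq_abs, abs_of_nonneg (hgnonneg u)]; exact hg1 u)
  simpa using this

end ProspectHelpers

/-- cdf of the portfolio return `lᵀX` when `X ∼ μ`. -/
noncomputable def G (μ : Measure (Fin n → ℝ)) (l : Fin n → ℝ) (u : ℝ) : ℝ :=
  (μ {x | ∑ i, l i * x i ≤ u}).toReal

/-- The class `V` of S-shaped utilities: on ℝ₋ a convex mixture of negative ramp
functions `u ↦ max(u,z)` (z ≤ 0), on ℝ₊ a convex mixture of capped ramp functions
`u ↦ min(u,z)` (z ≥ 0); such a `v` automatically satisfies `v 0 = 0`. -/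
def InV (v : ℝ → ℝ) : Prop :=
  ∃ w₁ w₂ : Measure ℝ, IsProbabilityMeasure w₁ ∧ IsProbabilityMeasure w₂ ∧
    (∀ᵐ z ∂w₁, z ≤ 0) ∧ (∀ᵐ z ∂w₂, 0 ≤ z) ∧
    Integrable (fun z : ℝ => z) w₁ ∧ Integrable (fun z : ℝ => z) w₂ ∧
    (∀ u : ℝ, u ≤ 0 → v u = ∫ z, max u z ∂w₁) ∧
    (∀ u : ℝ, 0 ≤ u → v u = ∫ z, min u z ∂w₂)

/-- κ weakly Prospect-dominates λ iff `E[v(κᵀX)] ≥ E[v(λᵀX)]` for every S-shaped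
utility `v` in the class `V`. -/
theorem prospect_dominance_iff_expected_utility
    (μ : Measure (Fin n → ℝ)) [IsProbabilityMeasure μ]
    (hbdd : ∃ C : ℝ, ∀ᵐ x ∂μ, ∀ i, |x i| ≤ C)
    (l k : Fin n → ℝ)
    (hl : l ∈ stdSimplex ℝ (Fin n)) (hk : k ∈ stdSimplex ℝ (Fin n)) :
    ((∀ z : ℝ, z ≤ 0 → (∫ u in z..0, (G μ k u - G μ l u)) ≤ 0) ∧
     (∀ z : ℝ, 0 < z → (∫ u in (0:ℝ)..z, (G μ k u - G μ l u)) ≤ 0)) ↔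
    (∀ v : ℝ → ℝ, InV v →
      (∫ x, v (∑ i, l i * x i) ∂μ) ≤ ∫ x, v (∑ i, k i * x i) ∂μ) := by
  classical
  have hYl : Measurable fun x : Fin n → ℝ => ∑ i, l i * x i :=
    Finset.measurable_sum _ fun i _ => by fun_prop
  have hYk : Measurable fun x : Fin n → ℝ => ∑ i, k i * x i :=
    Finset.measurable_sum _ fun i _ => by fun_prop
  haveI : IsProbabilityMeasure (μ.map fun x : Fin n → ℝ => ∑ i, l i * x i) :=
    Measure.isProbabilityMeasure_map hYl.aemeasurable
  haveI : IsProbabilityMeasure (μ.map fun x : Fin n → ℝ => ∑ i, k i * x i) :=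
    Measure.isProbabilityMeasure_map hYk.aemeasurable
  have hGfun : (fun u => G μ k u - G μ l u)
      = fun u => (((μ.map fun x : Fin n → ℝ => ∑ i, k i * x i) (Iic u)).toReal
          - ((μ.map fun x : Fin n → ℝ => ∑ i, l i * x i) (Iic u)).toReal) := by
    funext u
    rw [Measure.map_apply hYk measurableSet_Iic, Measure.map_apply hYl measurableSet_Iic]
    rfl
  constructor
  · rintro ⟨h1, h2⟩ v hv
    obtain ⟨w₁, w₂, hp₁, hp₂, hw₁, hw₂, hi₁, hi₂, hv₁, hv₂⟩ := hv
    haveI := hp₁; haveI := hp₂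
    rw [integral_v_rep μ _ hYl w₁ w₂ hp₁ hp₂ hw₁ hw₂ hi₁ hi₂ v hv₁ hv₂,
        integral_v_rep μ _ hYk w₁ w₂ hp₁ hp₂ hw₁ hw₂ hi₁ hi₂ v hv₁ hv₂]
    refine add_le_add
      (integral_mono_ae (phi_integrable _ w₁ hw₁ hi₁) (phi_integrable _ w₁ hw₁ hi₁)
        (hw₁.mono fun z hz => ?_))
      (integral_mono_ae (psi_integrable _ w₂ hi₂) (psi_integrable _ w₂ hi₂)
        (hw₂.mono fun z hz => ?_))
    · have hd := phi_diff (μ.map fun x : Fin n → ℝ => ∑ i, k i * x i)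
        (μ.map fun x : Fin n → ℝ => ∑ i, l i * x i) hz
      have hint := h1 z hz
      rw [show (fun u => G μ k u - G μ l u) = _ from hGfun] at hint
      rw [intervalIntegral.integral_sub ((cdf_mono _).intervalIntegrable)
        ((cdf_mono _).intervalIntegrable)] at hint hd
      beta_reduce
      linarith
    · rcases eq_or_lt_of_le hz with hz0 | hz0
      · beta_reduce
        rw [← hz0]
        simp
      · have hd := psi_diff (μ.map fun x : Fin n → ℝ => ∑ i, k i * x i)
          (μ.map fun x : Fin n → ℝ => ∑ i, l i * x i) z
        have hint := h2 z hz0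
        rw [show (fun u => G μ k u - G μ l u) = _ from hGfun] at hint
        rw [intervalIntegral.integral_sub ((cdf_mono _).intervalIntegrable)
          ((cdf_mono _).intervalIntegrable)] at hint hd
        beta_reduce
        linarith
  · intro h
    constructor
    · intro z hz
      set v : ℝ → ℝ := fun u => if u ≤ 0 then max u z else 0 with hvdef
      have hp₁ : IsProbabilityMeasure (Measure.dirac z) := inferInstance
      have hp₂ : IsProbabilityMeasure (Measure.dirac (0:ℝ)) := inferInstance
      have hw₁ : ∀ᵐ z' ∂(Measure.dirac z), z' ≤ 0 := by
        rw [ae_dirac_eq]; exact Filter.eventually_pure.mpr hz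
      have hw₂ : ∀ᵐ z' ∂(Measure.dirac (0:ℝ)), 0 ≤ z' := by
        rw [ae_dirac_eq]; exact Filter.eventually_pure.mpr le_rfl
      have hv₁ : ∀ u : ℝ, u ≤ 0 → v u = ∫ z', max u z' ∂(Measure.dirac z) := by
        intro u hu
        rw [integral_dirac, hvdef]
        simp [hu]
      have hv₂ : ∀ u : ℝ, 0 ≤ u → v u = ∫ z', min u z' ∂(Measure.dirac (0:ℝ)) := by
        intro u hu
        rw [integral_dirac, hvdef, min_eq_right hu]
        rcases eq_or_lt_of_le hu with h0 | h0
        · simp [← h0, max_eq_left hz]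
        · simp [not_le.mpr h0]
      have hin : InV v := ⟨Measure.dirac z, Measure.dirac 0, hp₁, hp₂, hw₁, hw₂,
        integrable_id_dirac z, integrable_id_dirac 0, hv₁, hv₂⟩
      have hle := h v hin
      rw [integral_v_rep μ _ hYl (Measure.dirac z) (Measure.dirac 0) hp₁ hp₂ hw₁ hw₂
          (integrable_id_dirac z) (integrable_id_dirac 0) v hv₁ hv₂,
        integral_v_rep μ _ hYk (Measure.dirac z) (Measure.dirac 0) hp₁ hp₂ hw₁ hw₂
          (integrable_id_dirac z) (integrable_id_dirac 0) v hv₁ hv₂,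
        integral_dirac, integral_dirac, integral_dirac, integral_dirac,
        intervalIntegral.integral_same, intervalIntegral.integral_same] at hle
      have hd := phi_diff (μ.map fun x : Fin n → ℝ => ∑ i, k i * x i)
        (μ.map fun x : Fin n → ℝ => ∑ i, l i * x i) hz
      rw [show (fun u => G μ k u - G μ l u) = _ from hGfun]
      rw [intervalIntegral.integral_sub ((cdf_mono _).intervalIntegrable)
        ((cdf_mono _).intervalIntegrable)] at hd ⊢
      linarith
    · intro z hz
      set v : ℝ → ℝ := fun u => if 0 < u then min u z else 0 with hvdef
      have hp₁ : IsProbabilityMeasure (Measure.dirac (0:ℝ)) := inferInstance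
      have hp₂ : IsProbabilityMeasure (Measure.dirac z) := inferInstance
      have hw₁ : ∀ᵐ z' ∂(Measure.dirac (0:ℝ)), z' ≤ 0 := by
        rw [ae_dirac_eq]; exact Filter.eventually_pure.mpr le_rfl
      have hw₂ : ∀ᵐ z' ∂(Measure.dirac z), 0 ≤ z' := by
        rw [ae_dirac_eq]; exact Filter.eventually_pure.mpr hz.le
      have hv₁ : ∀ u : ℝ, u ≤ 0 → v u = ∫ z', max u z' ∂(Measure.dirac (0:ℝ)) := by
        intro u hu
        rw [integral_dirac, hvdef, max_eq_right hu]
        simp [not_lt.mpr hu]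
      have hv₂ : ∀ u : ℝ, 0 ≤ u → v u = ∫ z', min u z' ∂(Measure.dirac z) := by
        intro u hu
        rw [integral_dirac, hvdef]
        rcases eq_or_lt_of_le hu with h0 | h0
        · simp [← h0, min_eq_left hz.le]
        · simp [h0]
      have hin : InV v := ⟨Measure.dirac 0, Measure.dirac z, hp₁, hp₂, hw₁, hw₂,
        integrable_id_dirac 0, integrable_id_dirac z, hv₁, hv₂⟩
      have hle := h v hin
      rw [integral_v_rep μ _ hYl (Measure.dirac (0:ℝ)) (Measure.dirac z) hp₁ hp₂ hw₁ hw₂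
          (integrable_id_dirac 0) (integrable_id_dirac z) v hv₁ hv₂,
        integral_v_rep μ _ hYk (Measure.dirac (0:ℝ)) (Measure.dirac z) hp₁ hp₂ hw₁ hw₂
          (integrable_id_dirac 0) (integrable_id_dirac z) v hv₁ hv₂,
        integral_dirac, integral_dirac, integral_dirac, integral_dirac,
        intervalIntegral.integral_same, intervalIntegral.integral_same] at hle
      have hd := psi_diff (μ.map fun x : Fin n → ℝ => ∑ i, k i * x i)
        (μ.map fun x : Fin n → ℝ => ∑ i, l i * x i) z
      rw [show (fun u => G μ k u - G μ l u) = _ from hGfun]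
      rw [intervalIntegral.integral_sub ((cdf_mono _).intervalIntegrable)
        ((cdf_mono _).intervalIntegrable)] at hd ⊢
      linarith
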